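/- Let ν ≠ κ be partitions of the same integer r, with β-number sequences β(ν) and β(κ) of length r. Then both ν/(ν∩κ) and κ/(ν∩κ) are ribbons if and only if |B(ν) ∩ B(κ)| = r - 2. -/

import Mathlib

/-- Two boxes share a common side. -/
def Adj (a b : ℕ × ℕ) : Prop :=
  (a.1 = b.1 ∧ (a.2 = b.2 + 1 ∨ b.2 = a.2 + 1)) ∨
  (a.2 = b.2 ∧ (a.1 = b.1 + 1 ∨ b.1 = a.1 + 1))

/-- A diagram is connected if any two of its boxes are joined by a path of
side-adjacent boxes lying inside the diagram. -/
def IsConnectedDiagram (θ : Set (ℕ × ℕ)) : Prop :=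
  ∀ a ∈ θ, ∀ b ∈ θ, Relation.ReflTransGen (fun x y => y ∈ θ ∧ Adj x y) a b

/-- The diagram contains no 2×2 block of boxes. -/
def NoSquare (θ : Set (ℕ × ℕ)) : Prop :=
  ¬ ∃ i j : ℕ, (i, j) ∈ θ ∧ (i + 1, j) ∈ θ ∧ (i, j + 1) ∈ θ ∧ (i + 1, j + 1) ∈ θ

/-- A ribbon: a nonempty connected diagram with no 2×2 block of boxes. -/
def IsRibbon (θ : Set (ℕ × ℕ)) : Prop :=
  θ.Nonempty ∧ IsConnectedDiagram θ ∧ NoSquare θ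

/-- Young diagram (rows and columns numbered from 1) of a partition with
at most `r` parts, given as `f : Fin r → ℕ`. -/
def cellsF {r : ℕ} (f : Fin r → ℕ) : Set (ℕ × ℕ) :=
  {p | ∃ i : Fin r, p.1 = (i : ℕ) + 1 ∧ 1 ≤ p.2 ∧ p.2 ≤ f i}

/-- The β-number `λ_i + s + 1 - i` (0-based index `i : Fin r`). -/
def betaNum {r : ℕ} (s : ℤ) (f : Fin r → ℕ) (i : Fin r) : ℤ :=
  (f i : ℤ) + s - (i : ℤ)

/-- The set of β-numbers. -/
def betaFinset {r : ℕ} (s : ℤ) (f : Fin r → ℕ) : Finset ℤ :=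
  Finset.image (betaNum s f) Finset.univ

/-- Dominance: all partial sums of `ν` are at most those of `κ`. -/
def Dominates {r : ℕ} (ν κ : Fin r → ℕ) : Prop :=
  ∀ k : Fin r, ∑ i ∈ Finset.univ.filter (· ≤ k), ν i ≤ ∑ i ∈ Finset.univ.filter (· ≤ k), κ i

/-- Strict dominance. -/
def StrictlyDominates {r : ℕ} (ν κ : Fin r → ℕ) : Prop :=
  Dominates ν κ ∧ ν ≠ κ

namespace Stmt9Aux

variable {r : ℕ}

/-- diagonal profile of the skew shape f / m (number of cells on diagonal `t`). -/
def prof (s : ℤ) (m f : Fin r → ℕ) (t : ℤ) : ℕ :=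
  (Finset.univ.filter (fun i : Fin r => betaNum s m i < t ∧ t ≤ betaNum s f i)).card

lemma prof_pos_iff {s : ℤ} {m f : Fin r → ℕ} {t : ℤ} :
    1 ≤ prof s m f t ↔ ∃ i : Fin r, betaNum s m i < t ∧ t ≤ betaNum s f i := by
  rw [prof, Nat.one_le_iff_ne_zero, Ne, Finset.card_eq_zero, ← Ne,
    ← Finset.nonempty_iff_ne_empty, Finset.filter_nonempty_iff]
  simp

lemma mem_skew_iff {f m : Fin r → ℕ} {p : ℕ × ℕ} :
    p ∈ cellsF f \ cellsF m ↔ ∃ i : Fin r, p.1 = (i : ℕ) + 1 ∧ m i < p.2 ∧ p.2 ≤ f i := by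
  simp only [cellsF, Set.mem_diff, Set.mem_setOf_eq]
  constructor
  · rintro ⟨⟨i, h1, h2, h3⟩, hnm⟩
    refine ⟨i, h1, ?_, h3⟩
    by_contra hc
    exact hnm ⟨i, h1, h2, by omega⟩
  · rintro ⟨i, h1, h2, h3⟩
    refine ⟨⟨i, h1, by omega, h3⟩, ?_⟩
    rintro ⟨i', h1', h2', h3'⟩
    have : i' = i := Fin.ext (by omega)
    subst this; omega

/-- content (diagonal index) of a cell, shifted by s. -/
def ctf (s : ℤ) (p : ℕ × ℕ) : ℤ := (p.2 : ℤ) + s - (p.1 : ℤ) + 1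

lemma skew_cell_of_prof {s : ℤ} {m f : Fin r → ℕ} {t : ℤ} (h : 1 ≤ prof s m f t) :
    ∃ p ∈ cellsF f \ cellsF m, ctf s p = t := by
  obtain ⟨i, h1, h2⟩ := prof_pos_iff.mp h
  simp only [betaNum] at h1 h2
  have hnn : 0 ≤ t - s + (i : ℤ) := by omega
  refine ⟨((i : ℕ) + 1, (t - s + (i : ℤ)).toNat), mem_skew_iff.mpr ⟨i, rfl, ?_, ?_⟩, ?_⟩
  · omega
  · omega
  · simp only [ctf]
    push_cast
    omega

lemma prof_of_skew_cell {s : ℤ} {m f : Fin r → ℕ} {p : ℕ × ℕ}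
    (hp : p ∈ cellsF f \ cellsF m) : 1 ≤ prof s m f (ctf s p) := by
  obtain ⟨i, h1, h2, h3⟩ := mem_skew_iff.mp hp
  refine prof_pos_iff.mpr ⟨i, ?_, ?_⟩ <;> simp only [betaNum, ctf, h1] <;> push_cast <;> omega

lemma cell_unique {s : ℤ} {m f : Fin r → ℕ} (h1 : ∀ t, prof s m f t ≤ 1) {p q : ℕ × ℕ}
    (hp : p ∈ cellsF f \ cellsF m) (hq : q ∈ cellsF f \ cellsF m)
    (hct : ctf s p = ctf s q) : p = q := by
  obtain ⟨i, hp1, hp2, hp3⟩ := mem_skew_iff.mp hp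
  obtain ⟨j, hq1, hq2, hq3⟩ := mem_skew_iff.mp hq
  have hip : i ∈ Finset.univ.filter
      (fun i : Fin r => betaNum s m i < ctf s p ∧ ctf s p ≤ betaNum s f i) := by
    simp only [Finset.mem_filter, Finset.mem_univ, true_and, betaNum, ctf, hp1]
    push_cast; omega
  have hjq : j ∈ Finset.univ.filter
      (fun i : Fin r => betaNum s m i < ctf s p ∧ ctf s p ≤ betaNum s f i) := by
    rw [hct]
    simp only [Finset.mem_filter, Finset.mem_univ, true_and, betaNum, ctf, hq1]
    push_cast; omega
  have hij : i = j := by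
    by_contra hne
    have := Finset.one_lt_card.mpr ⟨i, hip, j, hjq, hne⟩
    have := h1 (ctf s p)
    simp only [prof] at this
    omega
  subst hij
  have hfst : p.1 = q.1 := by omega
  have hsnd : p.2 = q.2 := by
    simp only [ctf] at hct
    omega
  exact Prod.ext hfst hsnd


lemma adj_symm {a b : ℕ × ℕ} (h : Adj a b) : Adj b a := by
  unfold Adj at *; tauto

lemma ctf_adj {s : ℤ} {a b : ℕ × ℕ} (h : Adj a b) :
    ctf s b = ctf s a + 1 ∨ ctf s b = ctf s a - 1 := by
  rcases h with ⟨h1, h2⟩ | ⟨h1, h2⟩ <;> unfold ctf <;> omega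

lemma adj_step {s : ℤ} {m f : Fin r → ℕ} (hf : Antitone f) (hm : Antitone m)
    (h1 : ∀ t, prof s m f t ≤ 1) {p q : ℕ × ℕ}
    (hp : p ∈ cellsF f \ cellsF m) (hq : q ∈ cellsF f \ cellsF m)
    (hct : ctf s q = ctf s p + 1) : Adj p q := by
  obtain ⟨i, hp1, hp2, hp3⟩ := mem_skew_iff.mp hp
  obtain ⟨i', hq1, hq2, hq3⟩ := mem_skew_iff.mp hq
  have hrel : (q.2 : ℤ) + (i : ℤ) = (p.2 : ℤ) + (i' : ℤ) + 1 := by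
    simp only [ctf, hp1, hq1] at hct
    push_cast at hct
    omega
  rcases Nat.lt_trichotomy (i' : ℕ) (i : ℕ) with hlt | heq | hgt
  · by_cases h2 : (i' : ℕ) + 1 = (i : ℕ)
    · right
      exact ⟨by omega, Or.inl (by omega)⟩
    · exfalso
      have hii : (i' : ℕ) + 2 ≤ (i : ℕ) := by omega
      have hi1 : (i : ℕ) - 1 < r := by omega
      set i'' : Fin r := ⟨(i : ℕ) - 1, hi1⟩ with hi''
      have hle1 : i'' ≤ i := by
        rw [Fin.le_def]; show (i : ℕ) - 1 ≤ (i : ℕ); omega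
      have hle2 : i' ≤ i'' := by
        rw [Fin.le_def]; show (i' : ℕ) ≤ (i : ℕ) - 1; omega
      by_cases hm2 : m i'' < p.2
      · have hmem : ((i'' : ℕ) + 1, p.2) ∈ cellsF f \ cellsF m :=
          mem_skew_iff.mpr ⟨i'', rfl, hm2, le_trans hp3 (hf hle1)⟩
        have hctq : ctf s ((i'' : ℕ) + 1, p.2) = ctf s q := by
          simp only [ctf, hi'', hp1, hq1] at *
          push_cast
          omega
        have heq2 := cell_unique h1 hmem hq hctq
        have h5 : (i'' : ℕ) + 1 = q.1 := (Prod.ext_iff.mp heq2).1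
        have h6 : (i'' : ℕ) = (i : ℕ) - 1 := rfl
        omega
      · push_neg at hm2
        have h4 : m i'' ≤ m i' := hm hle2
        omega
  · have : i' = i := Fin.ext heq
    subst this
    left
    exact ⟨by omega, Or.inr (by omega)⟩
  · exfalso
    have hle : i ≤ i' := by rw [Fin.le_def]; omega
    by_cases hj : p.2 + 1 ≤ f i
    · have hmem : (p.1, p.2 + 1) ∈ cellsF f \ cellsF m :=
        mem_skew_iff.mpr ⟨i, hp1, by omega, hj⟩
      have hctq : ctf s (p.1, p.2 + 1) = ctf s q := by
        simp only [ctf]; push_cast; omega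
      have heq2 := cell_unique h1 hmem hq hctq
      have h5 : p.1 = q.1 := (Prod.ext_iff.mp heq2).1
      omega
    · push_neg at hj
      have h4 : f i' ≤ f i := hf hle
      omega

lemma noSquare_of {s : ℤ} {m f : Fin r → ℕ} (h1 : ∀ t, prof s m f t ≤ 1) :
    NoSquare (cellsF f \ cellsF m) := by
  rintro ⟨i, j, ha, hb, hc, hd⟩
  have hct : ctf s ((i : ℕ), j) = ctf s (i + 1, j + 1) := by
    simp only [ctf]; push_cast; omega
  have heq2 := cell_unique h1 ha hd hct
  have h5 : i = i + 1 := (Prod.ext_iff.mp heq2).1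
  omega

lemma prof_le_one_of_noSquare {s : ℤ} {m f : Fin r → ℕ} (hf : Antitone f) (hm : Antitone m)
    (hns : NoSquare (cellsF f \ cellsF m)) : ∀ t, prof s m f t ≤ 1 := by
  have key : ∀ t : ℤ, ∀ i1 i2 : Fin r,
      (betaNum s m i1 < t ∧ t ≤ betaNum s f i1) →
      (betaNum s m i2 < t ∧ t ≤ betaNum s f i2) → (i1 : ℕ) < (i2 : ℕ) → False := by
    intro t i1 i2 hi1 hi2 hlt
    simp only [betaNum] at hi1 hi2
    have hnn : 0 ≤ t - s + (i1 : ℤ) := by omega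
    set j1 : ℕ := (t - s + (i1 : ℤ)).toNat with hj1
    have htn : (j1 : ℤ) = t - s + (i1 : ℤ) := Int.toNat_of_nonneg hnn
    have hiB : (i1 : ℕ) + 1 < r := by omega
    set iB : Fin r := ⟨(i1 : ℕ) + 1, hiB⟩ with hiBdef
    have hiBv : (iB : ℕ) = (i1 : ℕ) + 1 := rfl
    have hm1 : m iB ≤ m i1 := hm (by rw [Fin.le_def]; omega)
    have hf1 : f i2 ≤ f iB := hf (by rw [Fin.le_def]; omega)
    have hf2 : f i2 ≤ f i1 := hf (by rw [Fin.le_def]; omega)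
    apply hns
    refine ⟨(i1 : ℕ) + 1, j1, ?_, ?_, ?_, ?_⟩
    · exact mem_skew_iff.mpr ⟨i1, rfl, by omega, by omega⟩
    · exact mem_skew_iff.mpr ⟨iB, by omega, by omega, by omega⟩
    · exact mem_skew_iff.mpr ⟨i1, rfl, by omega, by omega⟩
    · exact mem_skew_iff.mpr ⟨iB, by omega, by omega, by omega⟩
  intro t
  by_contra hc
  push_neg at hc
  obtain ⟨i1, hi1, i2, hi2, hne⟩ := Finset.one_lt_card.mp (by simpa [prof] using hc)
  simp only [Finset.mem_filter, Finset.mem_univ, true_and] at hi1 hi2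
  rcases Nat.lt_trichotomy (i1 : ℕ) (i2 : ℕ) with h | h | h
  · exact key t i1 i2 hi1 hi2 h
  · exact hne (Fin.ext h)
  · exact key t i2 i1 hi2 hi1 h


lemma exists_ct_on_path {s : ℤ} {θ : Set (ℕ × ℕ)} {p q : ℕ × ℕ} (hp : p ∈ θ)
    (h : Relation.ReflTransGen (fun x y => y ∈ θ ∧ Adj x y) p q) :
    ∀ c : ℤ, ctf s p ≤ c → c ≤ ctf s q → ∃ x ∈ θ, ctf s x = c := by
  induction h with
  | refl => exact fun c h1 h2 => ⟨p, hp, by omega⟩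
  | @tail b q' hab step ih =>
    intro c h1 h2
    by_cases hc : c ≤ ctf s b
    · exact ih c h1 hc
    · rcases ctf_adj (s := s) step.2 with h3 | h3
      · exact ⟨q', step.1, by omega⟩
      · omega

lemma interval_of_conn {s : ℤ} {m f : Fin r → ℕ}
    (hconn : IsConnectedDiagram (cellsF f \ cellsF m)) :
    ∀ ⦃t1 t2 t3 : ℤ⦄, t1 ≤ t2 → t2 ≤ t3 →
      1 ≤ prof s m f t1 → 1 ≤ prof s m f t3 → 1 ≤ prof s m f t2 := by
  intro t1 t2 t3 h12 h23 h1 h3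
  obtain ⟨p1, hp1, hc1⟩ := skew_cell_of_prof h1
  obtain ⟨p3, hp3, hc3⟩ := skew_cell_of_prof h3
  obtain ⟨x, hx, hcx⟩ := exists_ct_on_path (s := s) hp1 (hconn p1 hp1 p3 hp3) t2 (by omega) (by omega)
  have := prof_of_skew_cell (s := s) hx
  rwa [hcx] at this

lemma connected_of {s : ℤ} {m f : Fin r → ℕ} (hf : Antitone f) (hm : Antitone m)
    (h1 : ∀ t, prof s m f t ≤ 1)
    (hint : ∀ ⦃t1 t2 t3 : ℤ⦄, t1 ≤ t2 → t2 ≤ t3 →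
      1 ≤ prof s m f t1 → 1 ≤ prof s m f t3 → 1 ≤ prof s m f t2) :
    IsConnectedDiagram (cellsF f \ cellsF m) := by
  have key : ∀ n : ℕ, ∀ p q : ℕ × ℕ, p ∈ cellsF f \ cellsF m → q ∈ cellsF f \ cellsF m →
      (ctf s q - ctf s p).natAbs = n →
      Relation.ReflTransGen (fun x y => y ∈ cellsF f \ cellsF m ∧ Adj x y) p q := by
    intro n
    induction n with
    | zero =>
      intro p q hp hq h0
      have : ctf s p = ctf s q := by omega
      rw [cell_unique h1 hp hq this]
    | succ n ih =>
      intro p q hp hq hn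
      rcases lt_trichotomy (ctf s p) (ctf s q) with h | h | h
      · have hmid : 1 ≤ prof s m f (ctf s p + 1) :=
          hint (by omega) (by omega) (prof_of_skew_cell hp) (prof_of_skew_cell hq)
        obtain ⟨p', hp', hct'⟩ := skew_cell_of_prof hmid
        exact Relation.ReflTransGen.head ⟨hp', adj_step hf hm h1 hp hp' hct'⟩
          (ih p' q hp' hq (by omega))
      · omega
      · have hmid : 1 ≤ prof s m f (ctf s p - 1) :=
          hint (t1 := ctf s q) (t3 := ctf s p) (by omega) (by omega)
            (prof_of_skew_cell hq) (prof_of_skew_cell hp)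
        obtain ⟨p', hp', hct'⟩ := skew_cell_of_prof hmid
        exact Relation.ReflTransGen.head
          ⟨hp', adj_symm (adj_step hf hm h1 hp' hp (by omega))⟩
          (ih p' q hp' hq (by omega))
  intro p hp q hq
  exact key (ctf s q - ctf s p).natAbs p q hp hq rfl

lemma ribbon_iff_prof {s : ℤ} {m f : Fin r → ℕ} (hf : Antitone f) (hm : Antitone m) :
    IsRibbon (cellsF f \ cellsF m) ↔
      (∀ t, prof s m f t ≤ 1) ∧
      (∀ ⦃t1 t2 t3 : ℤ⦄, t1 ≤ t2 → t2 ≤ t3 →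
        1 ≤ prof s m f t1 → 1 ≤ prof s m f t3 → 1 ≤ prof s m f t2) ∧
      (∃ t, 1 ≤ prof s m f t) := by
  constructor
  · rintro ⟨hne, hconn, hns⟩
    refine ⟨prof_le_one_of_noSquare hf hm hns, interval_of_conn hconn, ?_⟩
    obtain ⟨p, hp⟩ := hne
    exact ⟨ctf s p, prof_of_skew_cell hp⟩
  · rintro ⟨h1, hint, t, ht⟩
    obtain ⟨p, hp, -⟩ := skew_cell_of_prof ht
    exact ⟨⟨p, hp⟩, connected_of hf hm h1 hint, noSquare_of h1⟩


lemma betaNum_injective {s : ℤ} {f : Fin r → ℕ} (hf : Antitone f) :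
    Function.Injective (betaNum s f) := by
  intro i j hij
  by_contra hne
  rcases Nat.lt_trichotomy (i : ℕ) (j : ℕ) with h | h | h
  · have := hf (show i ≤ j by rw [Fin.le_def]; omega)
    simp only [betaNum] at hij; omega
  · exact hne (Fin.ext h)
  · have := hf (show j ≤ i by rw [Fin.le_def]; omega)
    simp only [betaNum] at hij; omega

lemma card_betaFinset {s : ℤ} {f : Fin r → ℕ} (hf : Antitone f) :
    (betaFinset s f).card = r := by
  rw [betaFinset, Finset.card_image_of_injective _ (betaNum_injective hf), Finset.card_univ,
    Fintype.card_fin]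

/-- number of β-numbers ≥ t -/
def Fcnt (s : ℤ) (f : Fin r → ℕ) (t : ℤ) : ℕ :=
  (Finset.univ.filter (fun i : Fin r => t ≤ betaNum s f i)).card

lemma Fcnt_succ_sub {s : ℤ} {f : Fin r → ℕ} (hf : Antitone f) (t : ℤ) :
    (Fcnt s f t : ℤ) - Fcnt s f (t + 1) = if t ∈ betaFinset s f then 1 else 0 := by
  have hsplit : Finset.univ.filter (fun i : Fin r => t ≤ betaNum s f i)
      = Finset.univ.filter (fun i : Fin r => t + 1 ≤ betaNum s f i)
        ∪ Finset.univ.filter (fun i : Fin r => betaNum s f i = t) := by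
    ext i
    simp only [Finset.mem_filter, Finset.mem_union, Finset.mem_univ, true_and]
    omega
  have hdisj : Disjoint (Finset.univ.filter (fun i : Fin r => t + 1 ≤ betaNum s f i))
      (Finset.univ.filter (fun i : Fin r => betaNum s f i = t)) := by
    rw [Finset.disjoint_left]
    intro i h1 h2
    simp only [Finset.mem_filter, Finset.mem_univ, true_and] at h1 h2
    omega
  have hcard : Fcnt s f t = Fcnt s f (t + 1)
      + (Finset.univ.filter (fun i : Fin r => betaNum s f i = t)).card := by
    rw [Fcnt, Fcnt, hsplit, Finset.card_union_of_disjoint hdisj]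
  by_cases ht : t ∈ betaFinset s f
  · obtain ⟨i, -, hi⟩ := Finset.mem_image.mp ht
    have : Finset.univ.filter (fun i : Fin r => betaNum s f i = t) = {i} := by
      ext j
      simp only [Finset.mem_filter, Finset.mem_univ, true_and, Finset.mem_singleton]
      constructor
      · intro hj; exact betaNum_injective hf (hj.trans hi.symm)
      · rintro rfl; exact hi
    rw [if_pos ht]
    rw [this, Finset.card_singleton] at hcard
    omega
  · have : Finset.univ.filter (fun i : Fin r => betaNum s f i = t) = ∅ := by
      ext j
      simp only [Finset.mem_filter, Finset.mem_univ, true_and, Finset.notMem_empty, iff_false]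
      intro hj
      exact ht (Finset.mem_image.mpr ⟨j, Finset.mem_univ j, hj⟩)
    rw [if_neg ht]
    rw [this, Finset.card_empty] at hcard
    omega

lemma Fcnt_split {s : ℤ} {m f : Fin r → ℕ} (hle : ∀ i, m i ≤ f i) (t : ℤ) :
    (Fcnt s f t : ℤ) = Fcnt s m t + prof s m f t := by
  have hsplit : Finset.univ.filter (fun i : Fin r => t ≤ betaNum s f i)
      = Finset.univ.filter (fun i : Fin r => t ≤ betaNum s m i)
        ∪ Finset.univ.filter (fun i : Fin r => betaNum s m i < t ∧ t ≤ betaNum s f i) := by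
    ext i
    have := hle i
    simp only [Finset.mem_filter, Finset.mem_union, Finset.mem_univ, true_and]
    simp only [Finset.mem_filter, Finset.mem_union, Finset.mem_univ, true_and, betaNum]
    omega
  have hdisj : Disjoint (Finset.univ.filter (fun i : Fin r => t ≤ betaNum s m i))
      (Finset.univ.filter (fun i : Fin r => betaNum s m i < t ∧ t ≤ betaNum s f i)) := by
    rw [Finset.disjoint_left]
    intro i h1 h2
    simp only [Finset.mem_filter, Finset.mem_univ, true_and] at h1 h2
    omega
  rw [Fcnt, Fcnt, prof, hsplit, Finset.card_union_of_disjoint hdisj]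
  push_cast
  ring

lemma telescope (g : ℤ → ℤ) : ∀ (n : ℕ) (x : ℤ),
    g x - g (x + n) = ∑ t ∈ Finset.Ico x (x + (n : ℤ)), (g t - g (t + 1)) := by
  intro n
  induction n with
  | zero => simp
  | succ n ih =>
    intro x
    have hins : Finset.Ico x (x + ((n : ℤ) + 1)) = insert (x + n) (Finset.Ico x (x + (n : ℤ))) := by
      ext u
      simp only [Finset.mem_Ico, Finset.mem_insert]
      omega
    push_cast
    rw [hins, Finset.sum_insert (by simp [Finset.mem_Ico])]
    have h2 := ih x
    have h3 : x + ((n : ℤ) + 1) = (x + n) + 1 := by ring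
    rw [h3]
    linarith [h2]

lemma descent_bound {g : ℤ → ℤ} {E : Finset ℤ}
    (hE : ∀ t, g t - g (t + 1) = 1 ↔ t ∈ E)
    (hΔ : ∀ t, g t - g (t + 1) ≤ 1) {x y : ℤ} (hxy : x ≤ y) :
    g x - g y ≤ ((E ∩ Finset.Ico x y).card : ℤ) := by
  have hyx : y = x + ((y - x).toNat : ℤ) := by omega
  rw [hyx, telescope g (y - x).toNat x]
  have hb : ∀ t ∈ Finset.Ico x (x + ((y - x).toNat : ℤ)),
      g t - g (t + 1) ≤ (if t ∈ E then (1 : ℤ) else 0) := by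
    intro t _
    by_cases ht : t ∈ E
    · rw [if_pos ht]; exact hΔ t
    · rw [if_neg ht]
      have h1 := hΔ t
      have h2 : ¬ (g t - g (t + 1) = 1) := fun hh => ht ((hE t).mp hh)
      omega
  calc ∑ t ∈ Finset.Ico x (x + ((y - x).toNat : ℤ)), (g t - g (t + 1))
      ≤ ∑ t ∈ Finset.Ico x (x + ((y - x).toNat : ℤ)), (if t ∈ E then (1 : ℤ) else 0) :=
        Finset.sum_le_sum hb
    _ = (((Finset.Ico x (x + ((y - x).toNat : ℤ))).filter (· ∈ E)).card : ℤ) := by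
        rw [Finset.sum_boole]
    _ = ((E ∩ Finset.Ico x (x + ((y - x).toNat : ℤ))).card : ℤ) := by
        rw [Finset.filter_mem_eq_inter, Finset.inter_comm]

lemma chain3 {g : ℤ → ℤ} {E : Finset ℤ}
    (hE : ∀ t, g t - g (t + 1) = 1 ↔ t ∈ E)
    (hΔ : ∀ t, g t - g (t + 1) ≤ 1) {x1 y1 x2 y2 x3 y3 : ℤ}
    (h1 : x1 ≤ y1) (h2 : y1 ≤ x2) (h3 : x2 ≤ y2) (h4 : y2 ≤ x3) (h5 : x3 ≤ y3) :
    (g x1 - g y1) + (g x2 - g y2) + (g x3 - g y3) ≤ (E.card : ℤ) := by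
  have b1 := descent_bound hE hΔ h1
  have b2 := descent_bound hE hΔ h3
  have b3 := descent_bound hE hΔ h5
  have hd12 : Disjoint (E ∩ Finset.Ico x1 y1) (E ∩ Finset.Ico x2 y2) := by
    rw [Finset.disjoint_left]
    intro t ht1 ht2
    simp only [Finset.mem_inter, Finset.mem_Ico] at ht1 ht2
    omega
  have hd123 : Disjoint ((E ∩ Finset.Ico x1 y1) ∪ (E ∩ Finset.Ico x2 y2))
      (E ∩ Finset.Ico x3 y3) := by
    rw [Finset.disjoint_left]
    intro t ht1 ht2
    simp only [Finset.mem_union, Finset.mem_inter, Finset.mem_Ico] at ht1 ht2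
    omega
  have hsub : ((E ∩ Finset.Ico x1 y1) ∪ (E ∩ Finset.Ico x2 y2)) ∪ (E ∩ Finset.Ico x3 y3) ⊆ E := by
    intro t ht
    simp only [Finset.mem_union, Finset.mem_inter] at ht
    tauto
  have hcards := Finset.card_le_card hsub
  rw [Finset.card_union_of_disjoint hd123, Finset.card_union_of_disjoint hd12] at hcards
  linarith


lemma na_aux {s : ℤ} {ν κ : Fin r → ℕ} (hν : Antitone ν) (hκ : Antitone κ)
    {t t' : ℤ} (h1 : t ≤ t' + 1) (h2 : t' ≤ t + 1)
    (ha : 1 ≤ prof s (fun i => min (ν i) (κ i)) ν t)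
    (hb : 1 ≤ prof s (fun i => min (ν i) (κ i)) κ t') : False := by
  obtain ⟨i, hi1, hi2⟩ := prof_pos_iff.mp ha
  obtain ⟨i', hj1, hj2⟩ := prof_pos_iff.mp hb
  simp only [betaNum] at hi1 hi2 hj1 hj2
  push_cast at hi1 hj1
  rcases Nat.lt_trichotomy (i : ℕ) (i' : ℕ) with h | h | h
  · have e1 : ν i' ≤ ν i := hν (by rw [Fin.le_def]; omega)
    have e2 : κ i' ≤ κ i := hκ (by rw [Fin.le_def]; omega)
    omega
  · have : i = i' := Fin.ext h
    subst this
    omega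
  · have e1 : ν i ≤ ν i' := hν (by rw [Fin.le_def]; omega)
    have e2 : κ i ≤ κ i' := hκ (by rw [Fin.le_def]; omega)
    omega

lemma prof_bound {s : ℤ} {m f : Fin r → ℕ} (hfr : ∀ i, f i ≤ r) {t : ℤ}
    (h : 1 ≤ prof s m f t) : s - r < t ∧ t ≤ s + r := by
  obtain ⟨i, h1, h2⟩ := prof_pos_iff.mp h
  simp only [betaNum] at h1 h2
  have h3 := hfr i
  have h4 : (i : ℕ) < r := i.isLt
  omega

lemma exists_interval {a : ℤ → ℕ} {lo hi : ℤ}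
    (hbd : ∀ t, 1 ≤ a t → lo < t ∧ t < hi)
    (hint : ∀ ⦃t1 t2 t3 : ℤ⦄, t1 ≤ t2 → t2 ≤ t3 → 1 ≤ a t1 → 1 ≤ a t3 → 1 ≤ a t2)
    (hne : ∃ t, 1 ≤ a t) :
    ∃ α β : ℤ, α ≤ β ∧ (∀ t, 1 ≤ a t ↔ α ≤ t ∧ t ≤ β) := by
  obtain ⟨t0, ht0⟩ := hne
  set Sa := (Finset.Icc lo hi).filter (fun t => 1 ≤ a t) with hSa
  have hmemS : ∀ t, 1 ≤ a t → t ∈ Sa := by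
    intro t ht
    have := hbd t ht
    simp only [hSa, Finset.mem_filter, Finset.mem_Icc]
    exact ⟨⟨by omega, by omega⟩, ht⟩
  have hSmem : ∀ t ∈ Sa, 1 ≤ a t := by
    intro t ht
    simp only [hSa, Finset.mem_filter] at ht
    exact ht.2
  have hSne : Sa.Nonempty := ⟨t0, hmemS t0 ht0⟩
  refine ⟨Sa.min' hSne, Sa.max' hSne, Sa.min'_le _ (Sa.max'_mem hSne), fun t => ⟨?_, ?_⟩⟩
  · intro ht
    exact ⟨Sa.min'_le t (hmemS t ht), Sa.le_max' t (hmemS t ht)⟩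
  · rintro ⟨h1, h2⟩
    exact hint h1 h2 (hSmem _ (Sa.min'_mem hSne)) (hSmem _ (Sa.max'_mem hSne))

lemma indicator_diff {a : ℤ → ℕ} {α β : ℤ} (hαβ : α ≤ β) (hle : ∀ t, a t ≤ 1)
    (hmem : ∀ t, 1 ≤ a t ↔ α ≤ t ∧ t ≤ β) :
    ∀ t, (a t : ℤ) - a (t + 1) = (if t = β then 1 else 0) - (if t = α - 1 then 1 else 0) := by
  have key : ∀ u, (a u : ℤ) = if α ≤ u ∧ u ≤ β then 1 else 0 := by
    intro u
    by_cases h : α ≤ u ∧ u ≤ β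
    · rw [if_pos h]
      have h2 := (hmem u).mpr h
      have h3 := hle u
      omega
    · rw [if_neg h]
      have h2 : ¬ 1 ≤ a u := fun hh => h ((hmem u).mp hh)
      omega
  intro t
  rw [key t, key (t + 1)]
  split_ifs <;> omega

end Stmt9Aux

open Stmt9Aux in
/-- For distinct partitions ν, κ of r: both ν/(ν∩κ) and κ/(ν∩κ) are ribbons iff the
sets of β-numbers of ν and κ (each of size r) share exactly r - 2 elements. -/
theorem stmt9 (r : ℕ) (s : ℤ) (ν κ : Fin r → ℕ) (hν : Antitone ν) (hκ : Antitone κ)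
    (hνsum : ∑ i, ν i = r) (hκsum : ∑ i, κ i = r) (hne : ν ≠ κ) :
    (IsRibbon (cellsF ν \ cellsF (fun i => min (ν i) (κ i))) ∧
     IsRibbon (cellsF κ \ cellsF (fun i => min (ν i) (κ i)))) ↔
      (betaFinset s ν ∩ betaFinset s κ).card = r - 2 := by
  classical
  -- r ≥ 2
  have hr2 : 2 ≤ r := by
    by_contra h
    have h0 : r = 0 ∨ r = 1 := by omega
    rcases h0 with rfl | rfl
    · exact hne (funext fun i => i.elim0)
    · apply hne
      funext i
      have h1 : ν 0 = 1 := by simpa using hνsum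
      have h2 : κ 0 = 1 := by simpa using hκsum
      have h3 : i = 0 := Subsingleton.elim i 0
      rw [h3, h1, h2]
  set μ : Fin r → ℕ := fun i => min (ν i) (κ i) with hμdef
  have hμa : Antitone μ := fun i j hij => min_le_min (hν hij) (hκ hij)
  have hμν : ∀ i, μ i ≤ ν i := fun i => min_le_left _ _
  have hμκ : ∀ i, μ i ≤ κ i := fun i => min_le_right _ _
  have hνr : ∀ i, ν i ≤ r := fun i =>
    hνsum ▸ Finset.single_le_sum (f := ν) (fun j _ => Nat.zero_le _) (Finset.mem_univ i)
  have hκr : ∀ i, κ i ≤ r := fun i =>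
    hκsum ▸ Finset.single_le_sum (f := κ) (fun j _ => Nat.zero_le _) (Finset.mem_univ i)
  have hexν : ∃ i, κ i < ν i := by
    by_contra h
    push_neg at h
    have heq := (Finset.sum_eq_sum_iff_of_le (fun i _ => h i)).mp (hνsum.trans hκsum.symm)
    exact hne (funext fun i => heq i (Finset.mem_univ i))
  have hexκ : ∃ i, ν i < κ i := by
    by_contra h
    push_neg at h
    have heq := (Finset.sum_eq_sum_iff_of_le (fun i _ => h i)).mp (hκsum.trans hνsum.symm)
    exact hne (funext fun i => (heq i (Finset.mem_univ i)).symm)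
  set a : ℤ → ℕ := prof s μ ν with hadef
  set b : ℤ → ℕ := prof s μ κ with hbdef
  set g : ℤ → ℤ := fun t => (Fcnt s ν t : ℤ) - Fcnt s κ t with hgdef
  set E : Finset ℤ := betaFinset s ν \ betaFinset s κ with hEdef
  have hg : ∀ t, g t = (a t : ℤ) - b t := by
    intro t
    have h1 := Fcnt_split (s := s) hμν t
    have h2 := Fcnt_split (s := s) hμκ t
    simp only [hgdef, hadef, hbdef]
    omega
  have hdio : ∀ t, g t - g (t + 1) =
      (if t ∈ betaFinset s ν then (1 : ℤ) else 0)
        - (if t ∈ betaFinset s κ then (1 : ℤ) else 0) := by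
    intro t
    have h1 := Fcnt_succ_sub (s := s) hν t
    have h2 := Fcnt_succ_sub (s := s) hκ t
    simp only [hgdef]
    linarith
  have hΔle : ∀ t, g t - g (t + 1) ≤ 1 := by
    intro t
    rw [hdio t]
    split_ifs <;> omega
  have hEiff : ∀ t, g t - g (t + 1) = 1 ↔ t ∈ E := by
    intro t
    rw [hdio t]
    by_cases h1 : t ∈ betaFinset s ν <;> by_cases h2 : t ∈ betaFinset s κ <;>
      simp [hEdef, Finset.mem_sdiff, h1, h2]
  have hsplitcard : E.card + (betaFinset s ν ∩ betaFinset s κ).card = r := by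
    rw [hEdef, Finset.card_sdiff_add_card_inter, card_betaFinset hν]
  have hna : ∀ t t' : ℤ, t ≤ t' + 1 → t' ≤ t + 1 → 1 ≤ a t → 1 ≤ b t' → False :=
    fun t t' h1 h2 ha hb => na_aux hν hκ h1 h2 ha hb
  have hbdA : ∀ t, 1 ≤ a t → s - r < t ∧ t < s + r + 1 := by
    intro t h
    have := prof_bound hνr h
    omega
  have hbdB : ∀ t, 1 ≤ b t → s - r < t ∧ t < s + r + 1 := by
    intro t h
    have := prof_bound hκr h
    omega
  have haN0 : ∃ t, 1 ≤ a t := by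
    obtain ⟨i, hi⟩ := hexν
    refine ⟨betaNum s ν i, prof_pos_iff.mpr ⟨i, ?_, le_refl _⟩⟩
    simp only [betaNum, hμdef]
    push_cast
    omega
  have hbN0 : ∃ t, 1 ≤ b t := by
    obtain ⟨i, hi⟩ := hexκ
    refine ⟨betaNum s κ i, prof_pos_iff.mpr ⟨i, ?_, le_refl _⟩⟩
    simp only [betaNum, hμdef]
    push_cast
    omega
  have hgz : ∀ t : ℤ, t ≤ s - r ∨ s + r + 1 ≤ t → g t = 0 := by
    intro t ht
    have haz : a t = 0 := by
      by_contra h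
      have := hbdA t (by omega)
      omega
    have hbz : b t = 0 := by
      by_contra h
      have := hbdB t (by omega)
      omega
    rw [hg t, haz, hbz]
    simp
  have hAiff := ribbon_iff_prof (s := s) (f := ν) (m := μ) hν hμa
  have hBiff := ribbon_iff_prof (s := s) (f := κ) (m := μ) hκ hμa
  rw [← hadef] at hAiff
  rw [← hbdef] at hBiff
  constructor
  · rintro ⟨hA, hB⟩
    obtain ⟨ha1, haI, haN⟩ := hAiff.mp hA
    obtain ⟨hb1, hbI, hbN⟩ := hBiff.mp hB
    obtain ⟨α, β1, hab1, hmemA⟩ := exists_interval hbdA haI haN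
    obtain ⟨γ, δ, hab2, hmemB⟩ := exists_interval hbdB hbI hbN
    have dA := indicator_diff hab1 ha1 hmemA
    have dB := indicator_diff hab2 hb1 hmemB
    have haβ : 1 ≤ a β1 := (hmemA β1).mpr ⟨hab1, le_refl _⟩
    have haα : 1 ≤ a α := (hmemA α).mpr ⟨le_refl _, hab1⟩
    have hbγ : 1 ≤ b γ := (hmemB γ).mpr ⟨le_refl _, hab2⟩
    have hbδ : 1 ≤ b δ := (hmemB δ).mpr ⟨hab2, le_refl _⟩
    have nadj : β1 + 1 ≠ γ := by
      intro h
      exact hna β1 γ (by omega) (by omega) haβ hbγ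
    have nsame1 : β1 ≠ δ := by
      intro h
      exact hna β1 δ (by omega) (by omega) haβ hbδ
    have nsame2 : α ≠ γ := by
      intro h
      exact hna α γ (by omega) (by omega) haα hbγ
    have hgd : ∀ t, g t - g (t + 1) = ((a t : ℤ) - a (t + 1)) - ((b t : ℤ) - b (t + 1)) := by
      intro t
      rw [hg t, hg (t + 1)]
      ring
    have hEeq : E = {β1, γ - 1} := by
      apply Finset.ext
      intro t
      rw [← hEiff t, hgd t, dA t, dB t]
      simp only [Finset.mem_insert, Finset.mem_singleton]
      split_ifs <;> omega
    have hE2 : E.card = 2 := by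
      rw [hEeq, Finset.card_insert_of_notMem (by simp only [Finset.mem_singleton]; omega),
        Finset.card_singleton]
    omega
  · intro hc
    have hE2 : E.card = 2 := by omega
    have hga : ∀ t, 1 ≤ a t → (1 : ℤ) ≤ g t := by
      intro t h
      have hbz : b t = 0 := by
        by_contra hh
        exact hna t t (by omega) (by omega) h (by omega)
      rw [hg]
      omega
    have hgb : ∀ t, 1 ≤ b t → g t ≤ -1 := by
      intro t h
      have haz : a t = 0 := by
        by_contra hh
        exact hna t t (by omega) (by omega) (by omega) h
      rw [hg]
      omega
    have hg0a : ∀ t, a t = 0 → g t ≤ 0 := by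
      intro t h
      rw [hg]
      omega
    have hg0b : ∀ t, b t = 0 → 0 ≤ g t := by
      intro t h
      rw [hg]
      omega
    have hgL : g (s - (r : ℤ)) = 0 := hgz _ (Or.inl (le_refl _))
    have hgH : g (s + (r : ℤ) + 1) = 0 := hgz _ (Or.inr (le_refl _))
    refine ⟨hAiff.mpr ⟨?_, ?_, ?_⟩, hBiff.mpr ⟨?_, ?_, ?_⟩⟩
    · -- a ≤ 1
      intro t
      by_contra h
      push_neg at h
      have hbz : b t = 0 := by
        by_contra hh
        exact hna t t (by omega) (by omega) (by omega) (by omega)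
      have hgt : (2 : ℤ) ≤ g t := by rw [hg]; omega
      obtain ⟨tb, htb⟩ := hbN0
      have hgtb := hgb tb htb
      have hb1 := hbdA t (by omega)
      have hb2 := hbdB tb htb
      rcases lt_or_ge t tb with hlt | hle
      · have := chain3 hEiff hΔle (x1 := s - r) (y1 := s - r) (x2 := t) (y2 := tb)
          (x3 := s + (r : ℤ) + 1) (y3 := s + (r : ℤ) + 1)
          (le_refl _) (by omega) (by omega) (by omega) (le_refl _)
        omega
      · have htne : tb < t := by
          rcases lt_or_eq_of_le hle with h' | h'
          · exact h'
          · exfalso; rw [h'] at htb; omega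
        have := chain3 hEiff hΔle (x1 := s - r) (y1 := tb) (x2 := t)
          (y2 := s + (r : ℤ) + 1) (x3 := s + (r : ℤ) + 1) (y3 := s + (r : ℤ) + 1)
          (by omega) (by omega) (by omega) (le_refl _) (le_refl _)
        omega
    · -- a interval
      intro t1 t2 t3 h12 h23 h1 h3
      by_contra h2a
      have h2z : a t2 = 0 := by omega
      have hg1 := hga t1 h1
      have hg3 := hga t3 h3
      have hg2 := hg0a t2 h2z
      obtain ⟨tb, htb⟩ := hbN0
      have hgtb := hgb tb htb
      have hb1 := hbdA t1 h1
      have hb3 := hbdA t3 h3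
      have hb2 := hbdB tb htb
      rcases lt_or_ge tb t1 with c1 | c1
      · have := chain3 hEiff hΔle (x1 := s - r) (y1 := tb) (x2 := t1) (y2 := t2)
          (x3 := t3) (y3 := s + (r : ℤ) + 1)
          (by omega) (by omega) (by omega) (by omega) (by omega)
        omega
      · rcases lt_or_ge t3 tb with c2 | c2
        · have := chain3 hEiff hΔle (x1 := t1) (y1 := t2) (x2 := t3) (y2 := tb)
            (x3 := s + (r : ℤ) + 1) (y3 := s + (r : ℤ) + 1)
            (by omega) (by omega) (by omega) (by omega) (le_refl _)
          omega
        · have := chain3 hEiff hΔle (x1 := t1) (y1 := tb) (x2 := t3)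
            (y2 := s + (r : ℤ) + 1) (x3 := s + (r : ℤ) + 1) (y3 := s + (r : ℤ) + 1)
            (by omega) (by omega) (by omega) (le_refl _) (le_refl _)
          omega
    · exact haN0
    · -- b ≤ 1
      intro t
      by_contra h
      push_neg at h
      have haz : a t = 0 := by
        by_contra hh
        exact hna t t (by omega) (by omega) (by omega) (by omega)
      have hgt : g t ≤ -2 := by rw [hg]; omega
      obtain ⟨ta, hta⟩ := haN0
      have hgta := hga ta hta
      have hb1 := hbdB t (by omega)
      have hb2 := hbdA ta hta
      rcases lt_or_ge ta t with hlt | hle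
      · have := chain3 hEiff hΔle (x1 := s - r) (y1 := s - r) (x2 := ta) (y2 := t)
          (x3 := s + (r : ℤ) + 1) (y3 := s + (r : ℤ) + 1)
          (le_refl _) (by omega) (by omega) (by omega) (le_refl _)
        omega
      · have htne : t < ta := by
          rcases lt_or_eq_of_le hle with h' | h'
          · exact h'
          · exfalso; rw [← h'] at hta; omega
        have := chain3 hEiff hΔle (x1 := s - r) (y1 := t) (x2 := ta)
          (y2 := s + (r : ℤ) + 1) (x3 := s + (r : ℤ) + 1) (y3 := s + (r : ℤ) + 1)
          (by omega) (by omega) (by omega) (le_refl _) (le_refl _)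
        omega
    · -- b interval
      intro t1 t2 t3 h12 h23 h1 h3
      by_contra h2a
      have h2z : b t2 = 0 := by omega
      have hg1 := hgb t1 h1
      have hg3 := hgb t3 h3
      have hg2 := hg0b t2 h2z
      obtain ⟨ta, hta⟩ := haN0
      have hgta := hga ta hta
      have hb1 := hbdB t1 h1
      have hb3 := hbdB t3 h3
      have hb2 := hbdA ta hta
      rcases lt_or_ge ta t1 with c1 | c1
      · have := chain3 hEiff hΔle (x1 := ta) (y1 := t1) (x2 := t2) (y2 := t3)
          (x3 := s + (r : ℤ) + 1) (y3 := s + (r : ℤ) + 1)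
          (by omega) (by omega) (by omega) (by omega) (le_refl _)
        omega
      · rcases lt_or_ge t3 ta with c2 | c2
        · have := chain3 hEiff hΔle (x1 := s - r) (y1 := t1) (x2 := t2) (y2 := t3)
            (x3 := ta) (y3 := s + (r : ℤ) + 1)
            (by omega) (by omega) (by omega) (by omega) (by omega)
          omega
        · have := chain3 hEiff hΔle (x1 := s - r) (y1 := t1) (x2 := ta) (y2 := t3)
            (x3 := s + (r : ℤ) + 1) (y3 := s + (r : ℤ) + 1)
            (by omega) (by omega) (by omega) (by omega) (le_refl _)
          omega
    · exact hbN0
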